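/- Fix positive integers k₁, k₂, k, n with k₁ ≤ k ≤ n and k₂ ≤ k ≤ n, and subsets I₁, I₂, J₁, J₂ ⊆ [n] with |I₁| = |I₂| = |J₁| = |J₂| = k, |I₁ ∩ I₂| = k₁ and |J₁ ∩ J₂| = k₂. Let X, Y₁, Y₂ be mutually independent centered Gaussian random variables with Var(X) = k₁k₂ and Var(Y₁) = Var(Y₂) = k² − k₁k₂. Then the pair of entry sums (Sum(C^n_{I₁,J₁}), Sum(C^n_{I₂,J₂})) equals in distribution (X + Y₁, X + Y₂). -/

import Mathlib

open MeasureTheory ProbabilityTheory Filter Real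
open scoped ENNReal NNReal

noncomputable section

/-- Sum of the entries of the submatrix of the infinite array `A` with row set `I`
and column set `J`. -/
def subSum (A : ℕ → ℕ → ℝ) (I J : Finset ℕ) : ℝ := ∑ i ∈ I, ∑ j ∈ J, A i j



lemma exp_decomp (v w : ℝ) (hv : 0 < v) (hw : 0 < w) (x y : ℝ) :
    rexp (-(x - 0)^2/(2*v)) * rexp (-(y - x)^2/(2*w))
      = rexp (-(y - 0)^2/(2*(v+w))) * rexp (-((v+w)/(2*v*w)) * (x - v*y/(v+w))^2) := by
  rw [← Real.exp_add, ← Real.exp_add]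
  congr 1
  have hvw : v + w ≠ 0 := by positivity
  field_simp
  ring

lemma const_decomp (v w : ℝ) (hv : 0 < v) (hw : 0 < w) :
    (√(2*π*v))⁻¹ * (√(2*π*w))⁻¹ * √(π/((v+w)/(2*v*w))) = (√(2*π*(v+w)))⁻¹ := by
  have hπ := Real.pi_pos
  have hvw : 0 < v + w := by positivity
  rw [← Real.sqrt_inv, ← Real.sqrt_inv, ← Real.sqrt_inv,
    ← Real.sqrt_mul (by positivity), ← Real.sqrt_mul (by positivity)]
  congr 1
  field_simp

lemma pdf_conv (v w : ℝ≥0) (hv : v ≠ 0) (hw : w ≠ 0) (y : ℝ) :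
    ∫ x, gaussianPDFReal 0 v x * gaussianPDFReal x w y = gaussianPDFReal 0 (v + w) y := by
  have hv' : (0:ℝ) < v := lt_of_le_of_ne v.coe_nonneg (by exact_mod_cast (Ne.symm hv))
  have hw' : (0:ℝ) < w := lt_of_le_of_ne w.coe_nonneg (by exact_mod_cast (Ne.symm hw))
  set a : ℝ := ((v:ℝ)+(w:ℝ))/(2*(v:ℝ)*(w:ℝ)) with ha
  have ha' : 0 < a := by positivity
  set c : ℝ := (v:ℝ)*y/((v:ℝ)+(w:ℝ)) with hc
  have heq : ∀ x : ℝ, gaussianPDFReal 0 v x * gaussianPDFReal x w y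
      = ((√(2*π*(v:ℝ)))⁻¹ * (√(2*π*(w:ℝ)))⁻¹ * rexp (-(y - 0)^2/(2*((v:ℝ)+(w:ℝ)))))
        * rexp (-a * (x - c)^2) := by
    intro x
    unfold gaussianPDFReal
    rw [show ((√(2 * π * (v:ℝ)))⁻¹ * rexp (-(x - 0) ^ 2 / (2 * (v:ℝ)))) *
        ((√(2 * π * (w:ℝ)))⁻¹ * rexp (-(y - x) ^ 2 / (2 * (w:ℝ))))
      = (√(2*π*(v:ℝ)))⁻¹ * (√(2*π*(w:ℝ)))⁻¹ *
        (rexp (-(x - 0)^2/(2*(v:ℝ))) * rexp (-(y - x)^2/(2*(w:ℝ)))) by ring,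
      exp_decomp (v:ℝ) (w:ℝ) hv' hw' x y]
    ring
  rw [integral_congr_ae (Filter.Eventually.of_forall heq), integral_const_mul,
    integral_sub_right_eq_self (fun t => rexp (-a * t^2)) c, integral_gaussian]
  unfold gaussianPDFReal
  push_cast
  rw [show ((√(2*π*(v:ℝ)))⁻¹ * (√(2*π*(w:ℝ)))⁻¹ * rexp (-(y - 0)^2/(2*((v:ℝ)+(w:ℝ))))) * √(π/a)
    = ((√(2*π*(v:ℝ)))⁻¹ * (√(2*π*(w:ℝ)))⁻¹ * √(π/a)) * rexp (-(y - 0)^2/(2*((v:ℝ)+(w:ℝ)))) by ring,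
    ha, const_decomp (v:ℝ) (w:ℝ) hv' hw']

lemma gaussianPDFReal_symm (m : ℝ) (w : ℝ≥0) (y : ℝ) :
    gaussianPDFReal m w y = gaussianPDFReal y w m := by
  unfold gaussianPDFReal
  rw [show (y - m)^2 = (m - y)^2 by ring]

lemma integrable_pdf_mul (v w : ℝ≥0) (y : ℝ) :
    Integrable (fun x => gaussianPDFReal 0 v x * gaussianPDFReal x w y) := by
  have : ∀ x, gaussianPDFReal 0 v x * gaussianPDFReal x w y
      = gaussianPDFReal y w x * gaussianPDFReal 0 v x := by
    intro x; rw [gaussianPDFReal_symm x w y]; ring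
  simp_rw [this]
  refine Integrable.bdd_mul (integrable_gaussianPDFReal 0 v)
    (stronglyMeasurable_gaussianPDFReal y w).aestronglyMeasurable (c := (√(2*π*(w:ℝ)))⁻¹) (Filter.Eventually.of_forall fun x => ?_)
  rw [Real.norm_eq_abs, abs_of_nonneg (gaussianPDFReal_nonneg _ _ _)]
  unfold gaussianPDFReal
  calc (√(2*π*(w:ℝ)))⁻¹ * rexp (-(x - y)^2/(2*(w:ℝ)))
      ≤ (√(2*π*(w:ℝ)))⁻¹ * 1 := by
        have hle : rexp (-(x - y)^2/(2*(w:ℝ))) ≤ 1 := by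
          refine Real.exp_le_one_iff.mpr ?_
          exact div_nonpos_of_nonpos_of_nonneg (neg_nonpos.mpr (sq_nonneg _)) (by positivity)
        exact mul_le_mul_of_nonneg_left hle (by positivity)
    _ = (√(2*π*(w:ℝ)))⁻¹ := mul_one _

lemma lintegral_pdf_conv (v w : ℝ≥0) (hv : v ≠ 0) (hw : w ≠ 0) (y : ℝ) :
    ∫⁻ x, gaussianPDF 0 v x * gaussianPDF x w y = gaussianPDF 0 (v + w) y := by
  simp_rw [gaussianPDF,
    ← ENNReal.ofReal_mul (gaussianPDFReal_nonneg 0 v _)]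
  rw [← ofReal_integral_eq_lintegral_ofReal (integrable_pdf_mul v w y)
    (Filter.Eventually.of_forall fun x =>
      mul_nonneg (gaussianPDFReal_nonneg _ _ _) (gaussianPDFReal_nonneg _ _ _)),
    pdf_conv v w hv hw y]

lemma gaussianReal_conv (v w : ℝ≥0) :
    Measure.map (fun p : ℝ × ℝ => p.1 + p.2) ((gaussianReal 0 v).prod (gaussianReal 0 w))
      = gaussianReal 0 (v + w) := by
  by_cases hv : v = 0
  · subst hv
    rw [gaussianReal_zero_var, Measure.dirac_prod,
      Measure.map_map measurable_add measurable_prodMk_left]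
    have : ((fun p : ℝ × ℝ => p.1 + p.2) ∘ (Prod.mk (0:ℝ))) = fun x : ℝ => (0:ℝ) + x := rfl
    rw [this]
    simpa using gaussianReal_map_const_add (μ := 0) (v := w) 0
  by_cases hw : w = 0
  · subst hw
    rw [gaussianReal_zero_var, Measure.prod_dirac,
      Measure.map_map measurable_add (measurable_prodMk_right)]
    have : ((fun p : ℝ × ℝ => p.1 + p.2) ∘ (fun x : ℝ => (x, (0:ℝ)))) = fun x : ℝ => x + 0 := rfl
    rw [this]
    simpa using gaussianReal_map_add_const (μ := 0) (v := v) 0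
  -- main case
  have hmeas_joint : Measurable (fun q : ℝ × ℝ => gaussianPDF q.1 w q.2) := by
    unfold gaussianPDF gaussianPDFReal
    fun_prop
  ext s hs
  rw [Measure.map_apply (by fun_prop) hs,
    Measure.prod_apply (hs.preimage (by fun_prop))]
  have h1 : ∀ x : ℝ, (gaussianReal 0 w) (Prod.mk x ⁻¹' ((fun p : ℝ × ℝ => p.1 + p.2) ⁻¹' s))
      = ∫⁻ y in s, gaussianPDF x w y := by
    intro x
    have hpre : (Prod.mk x ⁻¹' ((fun p : ℝ × ℝ => p.1 + p.2) ⁻¹' s)) = (fun y => x + y) ⁻¹' s := rfl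
    rw [hpre, ← Measure.map_apply (by fun_prop) hs, gaussianReal_map_const_add x, zero_add,
      gaussianReal_apply x hw s]
  simp_rw [h1]
  rw [gaussianReal_of_var_ne_zero 0 hv,
    lintegral_withDensity_eq_lintegral_mul _ (measurable_gaussianPDF 0 v)
      (Measurable.lintegral_prod_right' (ν := volume.restrict s) hmeas_joint)]
  simp only [Pi.mul_apply]
  have h2 : ∀ x : ℝ, gaussianPDF 0 v x * ∫⁻ y in s, gaussianPDF x w y
      = ∫⁻ y in s, gaussianPDF 0 v x * gaussianPDF x w y := fun x =>
    (lintegral_const_mul _ (measurable_gaussianPDF x w)).symm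
  simp_rw [h2]
  have hvw : v + w ≠ 0 := fun h => hv (by simpa using (add_eq_zero.mp h).1)
  rw [lintegral_lintegral_swap (((((measurable_gaussianPDF 0 v).comp measurable_fst).mul hmeas_joint)).aemeasurable)]
  simp_rw [lintegral_pdf_conv v w hv hw]
  rw [gaussianReal_apply 0 hvw s]

lemma map_finsetSum_gaussian {Ω : Type} [MeasurableSpace Ω] (μ : Measure Ω)
    [IsProbabilityMeasure μ] {ι : Type} (f : ι → Ω → ℝ) (hmeas : ∀ i, Measurable (f i))
    (hindep : iIndepFun f μ)
    (hgauss : ∀ i, Measure.map (f i) μ = gaussianReal 0 1) (T : Finset ι) :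
    Measure.map (fun ω => ∑ i ∈ T, f i ω) μ = gaussianReal 0 (T.card : ℝ≥0) := by
  classical
  induction T using Finset.induction_on with
  | empty =>
    simp only [Finset.sum_empty, Finset.card_empty, Nat.cast_zero]
    rw [Measure.map_const, measure_univ, one_smul, gaussianReal_zero_var]
  | @insert a T ha ih =>
    have hsum_meas : Measurable (fun ω => ∑ i ∈ T, f i ω) :=
      Finset.measurable_sum T (fun i _ => hmeas i)
    have hfn : (∑ j ∈ T, f j) = fun ω => ∑ i ∈ T, f i ω := by
      funext ω; exact Finset.sum_apply ω T f
    have hindepaT : IndepFun (f a) (fun ω => ∑ i ∈ T, f i ω) μ := by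
      have h := (hindep.indepFun_finsetSum_of_notMem hmeas ha).symm
      rwa [hfn] at h
    have hpair := (indepFun_iff_map_prod_eq_prod_map_map (hmeas a).aemeasurable
      hsum_meas.aemeasurable).mp hindepaT
    have hdec : (fun ω => ∑ i ∈ insert a T, f i ω)
        = (fun p : ℝ × ℝ => p.1 + p.2) ∘ (fun ω => (f a ω, ∑ i ∈ T, f i ω)) := by
      funext ω; simp [Finset.sum_insert ha]
    rw [hdec, ← Measure.map_map measurable_add ((hmeas a).prodMk hsum_meas), hpair,
      hgauss a, ih, gaussianReal_conv]
    congr 1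
    rw [Finset.card_insert_of_notMem ha]
    push_cast
    ring
/-- **Joint law of the entry sums of two overlapping submatrices.** Let `C` be an
infinite array of i.i.d. standard Gaussians, and let `I₁, I₂, J₁, J₂ ⊆ [n]` have
cardinality `k` with `|I₁ ∩ I₂| = k₁`, `|J₁ ∩ J₂| = k₂` (`k₁, k₂` positive, `≤ k ≤ n`).
Let `X, Y₁, Y₂` be independent centered Gaussians with variances `k₁k₂`, `k² − k₁k₂`,
`k² − k₁k₂`. Then `(Sum C_{I₁,J₁}, Sum C_{I₂,J₂})` equals `(X + Y₁, X + Y₂)` in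
distribution. -/
theorem pair_of_submatrix_sums_distribution
    {Ω : Type} [MeasurableSpace Ω] (μ : Measure Ω) [IsProbabilityMeasure μ]
    (C : Ω → ℕ → ℕ → ℝ)
    (hCmeas : ∀ i j, Measurable fun ω => C ω i j)
    (hCindep : iIndepFun
      (fun p : ℕ × ℕ => fun ω => C ω p.1 p.2) μ)
    (hCgauss : ∀ i j, Measure.map (fun ω => C ω i j) μ = gaussianReal 0 1)
    (n k k₁ k₂ : ℕ) (hk₁pos : 0 < k₁) (hk₂pos : 0 < k₂)
    (hk₁ : k₁ ≤ k) (hk₂ : k₂ ≤ k) (hkn : k ≤ n)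
    (I₁ I₂ J₁ J₂ : Finset ℕ)
    (hI₁ : I₁ ⊆ Finset.range n) (hI₂ : I₂ ⊆ Finset.range n)
    (hJ₁ : J₁ ⊆ Finset.range n) (hJ₂ : J₂ ⊆ Finset.range n)
    (hI₁c : I₁.card = k) (hI₂c : I₂.card = k) (hJ₁c : J₁.card = k) (hJ₂c : J₂.card = k)
    (hII : (I₁ ∩ I₂).card = k₁) (hJJ : (J₁ ∩ J₂).card = k₂) :
    Measure.map (fun ω => (subSum (C ω) I₁ J₁, subSum (C ω) I₂ J₂)) μ
      = Measure.map (fun v : ℝ × ℝ × ℝ => (v.1 + v.2.1, v.1 + v.2.2))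
          ((gaussianReal 0 ((k₁ * k₂ : ℕ) : ℝ≥0)).prod
            ((gaussianReal 0 ((k * k - k₁ * k₂ : ℕ) : ℝ≥0)).prod
              (gaussianReal 0 ((k * k - k₁ * k₂ : ℕ) : ℝ≥0)))) := by
  classical
  set g : ℕ × ℕ → Ω → ℝ := fun p ω => C ω p.1 p.2 with hg
  have hgmeas : ∀ p : ℕ × ℕ, Measurable (g p) := fun p => hCmeas p.1 p.2
  set T₀ : Finset (ℕ × ℕ) := (I₁ ∩ I₂) ×ˢ (J₁ ∩ J₂) with hT₀
  set T₁ : Finset (ℕ × ℕ) := I₁ ×ˢ J₁ \ T₀ with hT₁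
  set T₂ : Finset (ℕ × ℕ) := I₂ ×ˢ J₂ \ T₀ with hT₂
  have hsub₁ : T₀ ⊆ I₁ ×ˢ J₁ :=
    Finset.product_subset_product Finset.inter_subset_left Finset.inter_subset_left
  have hsub₂ : T₀ ⊆ I₂ ×ˢ J₂ :=
    Finset.product_subset_product Finset.inter_subset_right Finset.inter_subset_right
  -- cardinalities
  have hT₀c : T₀.card = k₁ * k₂ := by rw [hT₀, Finset.card_product, hII, hJJ]
  have hT₁c : T₁.card = k * k - k₁ * k₂ := by
    rw [hT₁, Finset.card_sdiff_of_subset hsub₁, Finset.card_product, hI₁c, hJ₁c, hT₀c]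
  have hT₂c : T₂.card = k * k - k₁ * k₂ := by
    rw [hT₂, Finset.card_sdiff_of_subset hsub₂, Finset.card_product, hI₂c, hJ₂c, hT₀c]
  -- disjointness
  have hd01 : Disjoint T₀ T₁ := Finset.disjoint_sdiff
  have hd02 : Disjoint T₀ T₂ := Finset.disjoint_sdiff
  have hd12 : Disjoint T₁ T₂ := by
    rw [Finset.disjoint_left]
    intro p hp1 hp2
    rw [hT₁, Finset.mem_sdiff, Finset.mem_product] at hp1
    rw [hT₂, Finset.mem_sdiff, Finset.mem_product] at hp2
    refine hp1.2 ?_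
    rw [hT₀, Finset.mem_product, Finset.mem_inter, Finset.mem_inter]
    exact ⟨⟨hp1.1.1, hp2.1.1⟩, ⟨hp1.1.2, hp2.1.2⟩⟩
  have hd012 : Disjoint T₀ (T₁ ∪ T₂) := Finset.disjoint_union_right.mpr ⟨hd01, hd02⟩
  -- the three sums
  set X : Ω → ℝ := fun ω => ∑ p ∈ T₀, g p ω with hX
  set Y₁ : Ω → ℝ := fun ω => ∑ p ∈ T₁, g p ω with hY₁
  set Y₂ : Ω → ℝ := fun ω => ∑ p ∈ T₂, g p ω with hY₂
  have hXmeas : Measurable X := Finset.measurable_sum T₀ (fun p _ => hgmeas p)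
  have hY₁meas : Measurable Y₁ := Finset.measurable_sum T₁ (fun p _ => hgmeas p)
  have hY₂meas : Measurable Y₂ := Finset.measurable_sum T₂ (fun p _ => hgmeas p)
  -- pointwise decomposition
  have hS₁ : ∀ ω, subSum (C ω) I₁ J₁ = X ω + Y₁ ω := by
    intro ω
    have h2 : ∑ p ∈ I₁ ×ˢ J₁, g p ω = ∑ i ∈ I₁, ∑ j ∈ J₁, C ω i j :=
      Finset.sum_product _ _ _
    rw [subSum, ← h2, hX, hY₁, add_comm]
    exact (Finset.sum_sdiff hsub₁).symm
  have hS₂ : ∀ ω, subSum (C ω) I₂ J₂ = X ω + Y₂ ω := by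
    intro ω
    have h2 : ∑ p ∈ I₂ ×ˢ J₂, g p ω = ∑ i ∈ I₂, ∑ j ∈ J₂, C ω i j :=
      Finset.sum_product _ _ _
    rw [subSum, ← h2, hX, hY₂, add_comm]
    exact (Finset.sum_sdiff hsub₂).symm
  -- marginal laws
  have hXlaw : Measure.map X μ = gaussianReal 0 ((k₁ * k₂ : ℕ) : ℝ≥0) := by
    rw [hX, map_finsetSum_gaussian μ g hgmeas hCindep (fun p => hCgauss p.1 p.2) T₀, hT₀c]
  have hY₁law : Measure.map Y₁ μ = gaussianReal 0 ((k * k - k₁ * k₂ : ℕ) : ℝ≥0) := by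
    rw [hY₁, map_finsetSum_gaussian μ g hgmeas hCindep (fun p => hCgauss p.1 p.2) T₁, hT₁c]
  have hY₂law : Measure.map Y₂ μ = gaussianReal 0 ((k * k - k₁ * k₂ : ℕ) : ℝ≥0) := by
    rw [hY₂, map_finsetSum_gaussian μ g hgmeas hCindep (fun p => hCgauss p.1 p.2) T₂, hT₂c]
  -- independence of Y₁ and Y₂
  have hindY : IndepFun Y₁ Y₂ μ := by
    have h := hCindep.indepFun_finset T₁ T₂ hd12 hgmeas
    have h2 := h.comp (φ := fun v : T₁ → ℝ => ∑ i : T₁, v i)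
      (ψ := fun v : T₂ → ℝ => ∑ i : T₂, v i)
      (Finset.measurable_sum Finset.univ (fun i _ => measurable_pi_apply i))
      (Finset.measurable_sum Finset.univ (fun i _ => measurable_pi_apply i))
    have e1 : ((fun v : T₁ → ℝ => ∑ i : T₁, v i) ∘ (fun a (i : T₁) => g i a)) = Y₁ := by
      funext a; simp only [Function.comp_apply, hY₁]; exact Finset.sum_coe_sort T₁ (fun p => g p a)
    have e2 : ((fun v : T₂ → ℝ => ∑ i : T₂, v i) ∘ (fun a (i : T₂) => g i a)) = Y₂ := by
      funext a; simp only [Function.comp_apply, hY₂]; exact Finset.sum_coe_sort T₂ (fun p => g p a)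
    rwa [e1, e2] at h2
  -- independence of X and (Y₁, Y₂)
  have hindXY : IndepFun X (fun ω => (Y₁ ω, Y₂ ω)) μ := by
    have h := hCindep.indepFun_finset T₀ (T₁ ∪ T₂) hd012 hgmeas
    set ψ : ((T₁ ∪ T₂ : Finset (ℕ × ℕ)) → ℝ) → ℝ × ℝ := fun v =>
      (∑ i ∈ Finset.univ.filter (fun i : (T₁ ∪ T₂ : Finset (ℕ × ℕ)) => (i : ℕ × ℕ) ∈ T₁), v i,
       ∑ i ∈ Finset.univ.filter (fun i : (T₁ ∪ T₂ : Finset (ℕ × ℕ)) => (i : ℕ × ℕ) ∈ T₂), v i)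
      with hψ
    have hψmeas : Measurable ψ :=
      (Finset.measurable_sum _ (fun i _ => measurable_pi_apply i)).prodMk
        (Finset.measurable_sum _ (fun i _ => measurable_pi_apply i))
    have h2 := h.comp (φ := fun v : T₀ → ℝ => ∑ i : T₀, v i) (ψ := ψ)
      (Finset.measurable_sum Finset.univ (fun i _ => measurable_pi_apply i)) hψmeas
    have e1 : ((fun v : T₀ → ℝ => ∑ i : T₀, v i) ∘ (fun a (i : T₀) => g i a)) = X := by
      funext a; simp only [Function.comp_apply, hX]; exact Finset.sum_coe_sort T₀ (fun p => g p a)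
    have key : ∀ (T : Finset (ℕ × ℕ)), T ⊆ T₁ ∪ T₂ → ∀ a : Ω,
        (∑ i ∈ Finset.univ.filter
            (fun i : (T₁ ∪ T₂ : Finset (ℕ × ℕ)) => (i : ℕ × ℕ) ∈ T), g i a)
          = ∑ p ∈ T, g p a := by
      intro T hT a
      rw [Finset.sum_filter]
      rw [show (∑ i : (T₁ ∪ T₂ : Finset (ℕ × ℕ)), if (i : ℕ × ℕ) ∈ T then g i a else 0)
        = ∑ p ∈ T₁ ∪ T₂, (if p ∈ T then g p a else 0) from
          Finset.sum_coe_sort (T₁ ∪ T₂) (fun p => if p ∈ T then g p a else 0)]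
      rw [Finset.sum_ite_mem, Finset.inter_eq_right.mpr hT]
    have e2 : (ψ ∘ (fun a (i : (T₁ ∪ T₂ : Finset (ℕ × ℕ))) => g i a)) = fun ω => (Y₁ ω, Y₂ ω) := by
      funext a
      simp only [Function.comp_apply, hψ, hY₁, hY₂]
      exact Prod.ext (key T₁ Finset.subset_union_left a) (key T₂ Finset.subset_union_right a)
    rwa [e1, e2] at h2
  -- joint laws
  have hpairYmeas : Measurable (fun ω => (Y₁ ω, Y₂ ω)) := hY₁meas.prodMk hY₂meas
  have hYlaw : Measure.map (fun ω => (Y₁ ω, Y₂ ω)) μ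
      = ((gaussianReal 0 ((k * k - k₁ * k₂ : ℕ) : ℝ≥0)).prod
          (gaussianReal 0 ((k * k - k₁ * k₂ : ℕ) : ℝ≥0))) := by
    rw [(indepFun_iff_map_prod_eq_prod_map_map hY₁meas.aemeasurable
      hY₂meas.aemeasurable).mp hindY, hY₁law, hY₂law]
  have htriple : Measure.map (fun ω => (X ω, (Y₁ ω, Y₂ ω))) μ
      = ((gaussianReal 0 ((k₁ * k₂ : ℕ) : ℝ≥0)).prod
          ((gaussianReal 0 ((k * k - k₁ * k₂ : ℕ) : ℝ≥0)).prod
            (gaussianReal 0 ((k * k - k₁ * k₂ : ℕ) : ℝ≥0)))) := by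
    rw [(indepFun_iff_map_prod_eq_prod_map_map hXmeas.aemeasurable
      hpairYmeas.aemeasurable).mp hindXY, hXlaw, hYlaw]
  -- final assembly
  have hdec : (fun ω => (subSum (C ω) I₁ J₁, subSum (C ω) I₂ J₂))
      = (fun v : ℝ × ℝ × ℝ => (v.1 + v.2.1, v.1 + v.2.2)) ∘ (fun ω => (X ω, (Y₁ ω, Y₂ ω))) := by
    funext ω
    simp only [Function.comp_apply, hS₁ ω, hS₂ ω]
  rw [hdec, ← Measure.map_map (by fun_prop) (hXmeas.prodMk hpairYmeas), htriple]
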